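/- Let m ≥ 1, let ν be an additive Haar measure on the real vector space Herm(m) of m×m complex Hermitian matrices, let A be an invertible m×m complex matrix and C ∈ Herm(m). Then the pushforward of ν under the map X ↦ A X A* + C equals (|det A|^{2m})⁻¹ • ν. (Complex case β = 2 of Proposition 1(i) in measure form.) -/

import Mathlib

open Matrix MeasureTheory ComplexOrder
noncomputable section

/-- The real vector space of `m × m` complex Hermitian matrices. -/
def HermMat (m : ℕ) : Submodule ℝ (Matrix (Fin m) (Fin m) ℂ) where
  carrier := {X | X.IsHermitian}
  add_mem' := fun h1 h2 => h1.add h2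
  zero_mem' := Matrix.isHermitian_zero
  smul_mem' := fun c X hX => by
    show (c • X)ᴴ = c • X
    rw [Matrix.conjTranspose_smul, star_trivial]
    exact congrArg (c • ·) hX

lemma mem_hermMat {m : ℕ} {X : Matrix (Fin m) (Fin m) ℂ} (h : X ∈ HermMat m) :
    X.IsHermitian := h

/-- `HermMat m` carries its Borel σ-algebra. -/
instance (m : ℕ) : MeasurableSpace (HermMat m) := borel _
instance (m : ℕ) : BorelSpace (HermMat m) := ⟨rfl⟩
lemma isHermitian_congr {m : ℕ} (A : Matrix (Fin m) (Fin m) ℂ)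
    {X : Matrix (Fin m) (Fin m) ℂ} (hX : X.IsHermitian) : (A * X * Aᴴ).IsHermitian := by
  show (A * X * Aᴴ)ᴴ = A * X * Aᴴ
  rw [Matrix.conjTranspose_mul, Matrix.conjTranspose_mul,
    Matrix.conjTranspose_conjTranspose, hX.eq, Matrix.mul_assoc]

/-- The map `X ↦ A X A*` on Hermitian matrices. -/
def hermCongrFun {m : ℕ} (A : Matrix (Fin m) (Fin m) ℂ) (X : HermMat m) : HermMat m :=
  ⟨A * X.1 * Aᴴ, isHermitian_congr A (mem_hermMat X.2)⟩

variable {m : ℕ}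

/-- From coordinates to matrix. -/
def toMatC (f : Fin m × Fin m → ℂ) : Matrix (Fin m) (Fin m) ℂ :=
  Matrix.of fun i j =>
    if i = j then f (i, i)
    else if i < j then f (i, j) + Complex.I * f (j, i)
    else f (j, i) - Complex.I * f (i, j)

/-- Coordinates of a matrix. -/
def coordsC (X : Matrix (Fin m) (Fin m) ℂ) (p : Fin m × Fin m) : ℂ :=
  if p.1 = p.2 then X p.1 p.1
  else if p.1 < p.2 then (X p.1 p.2 + X p.2 p.1) / 2
  else Complex.I / 2 * (X p.1 p.2 - X p.2 p.1)

lemma toMatC_coordsC (X : Matrix (Fin m) (Fin m) ℂ) : toMatC (coordsC X) = X := by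
  ext i j
  rcases lt_trichotomy i j with h | h | h
  · simp only [toMatC, coordsC, Matrix.of_apply, h, h.ne, h.ne', if_true, if_false,
      not_lt_of_gt h, asymm h]
    ring_nf
    simp [Complex.I_sq]
    try ring
  · simp [toMatC, coordsC, h]
  · simp only [toMatC, coordsC, Matrix.of_apply, h, h.ne, h.ne', if_true, if_false,
      not_lt_of_gt h, asymm h]
    ring_nf
    simp [Complex.I_sq]
    try ring

lemma coordsC_toMatC (f : Fin m × Fin m → ℂ) : coordsC (toMatC f) = f := by
  funext p
  obtain ⟨i, j⟩ := p
  rcases lt_trichotomy i j with h | h | h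
  · simp only [coordsC, toMatC, Matrix.of_apply, h, h.ne, h.ne', if_true, if_false,
      not_lt_of_gt h, asymm h]
    ring
  · simp [coordsC, toMatC, h]
  · simp only [coordsC, toMatC, Matrix.of_apply, h, h.ne, h.ne', if_true, if_false,
      not_lt_of_gt h, asymm h]
    ring_nf
    simp [Complex.I_sq]
    try ring

/-- Coordinates as a complex linear equivalence. -/
def eqC (m : ℕ) : Matrix (Fin m) (Fin m) ℂ ≃ₗ[ℂ] (Fin m × Fin m → ℂ) where
  toFun := coordsC
  invFun := toMatC
  map_add' X Y := by
    funext p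
    simp only [coordsC, Matrix.add_apply, Pi.add_apply]
    split_ifs <;> ring
  map_smul' c X := by
    funext p
    simp only [coordsC, Matrix.smul_apply, Pi.smul_apply, smul_eq_mul, RingHom.id_apply]
    split_ifs <;> ring
  left_inv := toMatC_coordsC
  right_inv := coordsC_toMatC

lemma coordsC_real {X : Matrix (Fin m) (Fin m) ℂ} (hX : X.IsHermitian) (p : Fin m × Fin m) :
    ((coordsC X p).re : ℂ) = coordsC X p := by
  obtain ⟨i, j⟩ := p
  have h1 : ∀ a b, X b a = (starRingEnd ℂ) (X a b) := by
    intro a b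
    conv_lhs => rw [← hX.eq]
    simp [Matrix.conjTranspose_apply]
  rcases lt_trichotomy i j with h | h | h
  · simp only [coordsC, h, h.ne, if_false, if_true, not_lt_of_gt h, asymm h]
    rw [h1 i j]
    rw [Complex.ext_iff]
    constructor <;> simp
  · simp only [coordsC, h, if_true]
    have := h1 j j
    rw [Complex.ext_iff] at this ⊢
    simp at this ⊢
    linarith
  · simp only [coordsC, h, h.ne', if_false, if_true, not_lt_of_gt h, asymm h]
    rw [h1 j i]
    rw [Complex.ext_iff]
    constructor <;> simp <;> ring

lemma toMatC_isHermitian (f : Fin m × Fin m → ℝ) :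
    (toMatC fun p => (f p : ℂ)).IsHermitian := by
  show _ᴴ = _
  ext i j
  simp only [Matrix.conjTranspose_apply, toMatC, Matrix.of_apply]
  rcases lt_trichotomy i j with h | h | h
  · simp only [h, h.ne, h.ne', if_false, if_true, not_lt_of_gt h, asymm h]
    simp [Complex.ext_iff]
  · simp [h, Complex.ext_iff]
  · simp only [h, h.ne, h.ne', if_false, if_true, not_lt_of_gt h, asymm h]
    simp [Complex.ext_iff]

/-- Real coordinates on Hermitian matrices. -/
def eqR (m : ℕ) : HermMat m ≃ₗ[ℝ] (Fin m × Fin m → ℝ) where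
  toFun X p := (coordsC X.1 p).re
  invFun f := ⟨toMatC fun p => (f p : ℂ), toMatC_isHermitian f⟩
  map_add' X Y := by
    funext p
    have : coordsC (X.1 + Y.1) p = coordsC X.1 p + coordsC Y.1 p := by
      simp only [coordsC, Matrix.add_apply]
      split_ifs <;> ring
    simp [this]
  map_smul' c X := by
    funext p
    have : coordsC (c • X.1) p = (c : ℂ) * coordsC X.1 p := by
      simp only [coordsC, Matrix.smul_apply]
      split_ifs <;> simp [Complex.real_smul] <;> ring
    simp [this]
  left_inv X := by
    apply Subtype.ext
    show (toMatC fun p => (((coordsC X.1 p).re : ℝ) : ℂ)) = X.1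
    have h : (fun p => (((coordsC X.1 p).re : ℝ) : ℂ)) = coordsC X.1 :=
      funext fun p => coordsC_real X.2 p
    rw [h, toMatC_coordsC]
  right_inv f := by
    funext p
    have := coordsC_toMatC (m := m) fun p => (f p : ℂ)
    simp only [show coordsC (toMatC fun p => (f p : ℂ)) = fun p => (f p : ℂ) from this]
    simp

open Kronecker in
/-- Entry-wise coordinates on complex matrices. -/
def eqEntry (m : ℕ) : Matrix (Fin m) (Fin m) ℂ ≃ₗ[ℂ] (Fin m × Fin m → ℂ) where
  toFun X p := X p.1 p.2
  invFun f := Matrix.of fun i j => f (i, j)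
  map_add' X Y := rfl
  map_smul' c X := rfl
  left_inv X := rfl
  right_inv f := rfl

/-- The congruence map `X ↦ A X Aᴴ` as a complex linear endomorphism of matrices. -/
def congrC (A : Matrix (Fin m) (Fin m) ℂ) :
    Matrix (Fin m) (Fin m) ℂ →ₗ[ℂ] Matrix (Fin m) (Fin m) ℂ where
  toFun X := A * X * Aᴴ
  map_add' X Y := by
    show A * (X + Y) * Aᴴ = A * X * Aᴴ + A * Y * Aᴴ
    rw [Matrix.mul_add, Matrix.add_mul]
  map_smul' c X := by
    show A * (c • X) * Aᴴ = c • (A * X * Aᴴ)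
    rw [Matrix.mul_smul, Matrix.smul_mul]

open Kronecker in
lemma det_congrC (A : Matrix (Fin m) (Fin m) ℂ) :
    LinearMap.det (congrC A) = A.det ^ m * (starRingEnd ℂ A.det) ^ m := by
  classical
  let b : Module.Basis (Fin m × Fin m) ℂ (Matrix (Fin m) (Fin m) ℂ) := Module.Basis.ofEquivFun (eqEntry m)
  rw [← LinearMap.det_toMatrix b]
  have hb : ∀ q : Fin m × Fin m, b q = Matrix.single q.1 q.2 1 := by
    intro q
    rw [show b q = (eqEntry m).symm (Pi.single q 1) by
      rw [Module.Basis.coe_ofEquivFun (eqEntry m)]]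
    rw [LinearEquiv.symm_apply_eq]
    funext p
    obtain ⟨i, j⟩ := p
    simp only [eqEntry, Matrix.single, Pi.single_apply, Prod.ext_iff,
      Matrix.of_apply, LinearEquiv.coe_mk, eq_comm]
    rfl
  have key : LinearMap.toMatrix b b (congrC A) = A ⊗ₖ Aᴴᵀ := by
    ext p q
    obtain ⟨i, j⟩ := p
    obtain ⟨k, l⟩ := q
    rw [LinearMap.toMatrix_apply, hb]
    show (congrC A (Matrix.single k l 1)) i j = _
    simp [eqEntry, congrC, Matrix.mul_apply, Matrix.single, ite_and, mul_ite, ite_mul,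
      Finset.sum_ite_eq, Finset.sum_ite_eq', kroneckerMap_apply]
  rw [key, Matrix.det_kronecker]
  simp [Matrix.det_transpose, Matrix.det_conjTranspose]

/-- The congruence map as a real linear endomorphism of Hermitian matrices. -/
def congrR (A : Matrix (Fin m) (Fin m) ℂ) : HermMat m →ₗ[ℝ] HermMat m where
  toFun X := ⟨A * X.1 * Aᴴ, by
    have hX : (X.1).IsHermitian := X.2
    show (A * X.1 * Aᴴ)ᴴ = A * X.1 * Aᴴ
    rw [Matrix.conjTranspose_mul, Matrix.conjTranspose_mul,
      Matrix.conjTranspose_conjTranspose, hX.eq, Matrix.mul_assoc]⟩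
  map_add' X Y := by
    apply Subtype.ext
    show A * (X.1 + Y.1) * Aᴴ = A * X.1 * Aᴴ + A * Y.1 * Aᴴ
    rw [Matrix.mul_add, Matrix.add_mul]
  map_smul' c X := by
    apply Subtype.ext
    show A * (c • X.1) * Aᴴ = c • (A * X.1 * Aᴴ)
    rw [Matrix.mul_smul, Matrix.smul_mul]

lemma det_congrR (A : Matrix (Fin m) (Fin m) ℂ) :
    LinearMap.det (congrR (m := m) A) = ‖A.det‖ ^ (2 * m) := by
  classical
  let bR : Module.Basis (Fin m × Fin m) ℝ (HermMat m) := Module.Basis.ofEquivFun (eqR m)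
  let bC : Module.Basis (Fin m × Fin m) ℂ (Matrix (Fin m) (Fin m) ℂ) := Module.Basis.ofEquivFun (eqC m)
  have hval : ∀ q : Fin m × Fin m, ((bR q : HermMat m) : Matrix (Fin m) (Fin m) ℂ) = bC q := by
    intro q
    rw [show bR q = (eqR m).symm (Pi.single q 1) by rw [Module.Basis.coe_ofEquivFun (eqR m)],
        show bC q = (eqC m).symm (Pi.single q 1) by rw [Module.Basis.coe_ofEquivFun (eqC m)]]
    have h2 : (((eqR m).symm (Pi.single q 1) : HermMat m) : Matrix (Fin m) (Fin m) ℂ)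
        = toMatC fun p => ((Pi.single q 1 : (Fin m × Fin m) → ℝ) p : ℂ) := rfl
    have h3 : (eqC m).symm (Pi.single q 1) = toMatC (Pi.single q 1) := rfl
    rw [h2, h3]
    have h4 : (fun p => ((Pi.single q 1 : (Fin m × Fin m) → ℝ) p : ℂ))
        = (Pi.single q (1:ℂ)) := by
      funext p
      by_cases hp : p = q
      · subst hp; simp
      · simp [Pi.single_apply, hp]
    rw [h4]
  have key : LinearMap.toMatrix bC bC (congrC A)
      = (LinearMap.toMatrix bR bR (congrR A)).map (algebraMap ℝ ℂ) := by
    ext p q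
    rw [Matrix.map_apply, LinearMap.toMatrix_apply, LinearMap.toMatrix_apply]
    rw [Module.Basis.ofEquivFun_repr_apply, Module.Basis.ofEquivFun_repr_apply]
    show coordsC (A * (bC q) * Aᴴ) p = ((coordsC ((congrR A (bR q)).1) p).re : ℂ)
    have h1 : (congrR A (bR q)).1 = A * (bC q) * Aᴴ := by
      show A * ((bR q : HermMat m) : Matrix (Fin m) (Fin m) ℂ) * Aᴴ = _
      rw [hval]
    rw [h1]
    exact (coordsC_real (by rw [← h1]; exact (congrR A (bR q)).2) p).symm
  have hdet : ((LinearMap.det (congrR (m := m) A) : ℝ) : ℂ) = LinearMap.det (congrC A) := by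
    rw [← LinearMap.det_toMatrix bR, ← LinearMap.det_toMatrix bC, key]
    rw [show (LinearMap.toMatrix bR bR (congrR A)).map ⇑(algebraMap ℝ ℂ)
        = (algebraMap ℝ ℂ).mapMatrix (LinearMap.toMatrix bR bR (congrR A)) from rfl]
    rw [← RingHom.map_det]
    rfl
  rw [det_congrC] at hdet
  have habs : (A.det) * (starRingEnd ℂ A.det) = ((‖A.det‖ ^ 2 : ℝ) : ℂ) := by
    rw [Complex.mul_conj]
    simp [Complex.normSq_eq_norm_sq]
  have : ((LinearMap.det (congrR (m := m) A) : ℝ) : ℂ) = ((‖A.det‖ ^ (2 * m) : ℝ) : ℂ) := by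
    rw [hdet, ← mul_pow, habs]
    push_cast
    ring
  exact_mod_cast this

/-- complex case β = 2 of Proposition 1(i), measure form: for an additive
Haar measure `ν` on the Hermitian matrices, invertible complex `A` and Hermitian `C`, the
pushforward of `ν` under `X ↦ A X A* + C` is `(|det A| ^ (2m))⁻¹ • ν`. -/
theorem map_affine_hermCongr (m : ℕ) (hm : 1 ≤ m) (ν : Measure (HermMat m))
    [ν.IsAddHaarMeasure] (A : Matrix (Fin m) (Fin m) ℂ) (hA : IsUnit A.det) (C : HermMat m) :
    ν.map (fun X => hermCongrFun A X + C)
      = (ENNReal.ofReal (‖A.det‖ ^ (2 * m)))⁻¹ • ν := by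
  classical
  have hne : A.det ≠ 0 := hA.ne_zero
  have habs : (0:ℝ) < ‖A.det‖ := norm_pos_iff.mpr hne
  haveI : FiniteDimensional ℝ (HermMat m) := Module.Finite.equiv (eqR m).symm
  have hcont : Continuous (eqR m) := LinearMap.continuous_of_finiteDimensional (eqR m).toLinearMap
  have hcont2 : Continuous (eqR m).symm :=
    LinearMap.continuous_of_finiteDimensional (eqR m).symm.toLinearMap
  haveI : (ν.map (eqR m)).IsAddHaarMeasure := by
    have h := AddEquiv.isAddHaarMeasure_map ν (eqR m).toAddEquiv hcont hcont2
    exact h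
  set ψ : (Fin m × Fin m → ℝ) →ₗ[ℝ] (Fin m × Fin m → ℝ) :=
    ((eqR m : HermMat m →ₗ[ℝ] (Fin m × Fin m → ℝ)) ∘ₗ congrR A) ∘ₗ
      ((eqR m).symm : (Fin m × Fin m → ℝ) →ₗ[ℝ] HermMat m) with hψ
  have hψdet : LinearMap.det ψ = ‖A.det‖ ^ (2 * m) := by
    have := LinearMap.det_conj (congrR (m := m) A) (eqR m)
    rw [hψ, LinearMap.comp_assoc, this, det_congrR]
  have hψne : LinearMap.det ψ ≠ 0 := by
    rw [hψdet]; positivity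
  have hψcont : Continuous ψ := LinearMap.continuous_of_finiteDimensional ψ
  have hfun : (fun X => hermCongrFun A X + C)
      = ((eqR m).symm ∘ (fun y => ψ y + eqR m C) ∘ (eqR m)) := by
    funext X
    simp only [Function.comp_apply, hψ, LinearMap.comp_apply, LinearEquiv.coe_coe,
      LinearEquiv.symm_apply_apply]
    rw [← map_add, LinearEquiv.symm_apply_apply]
    rfl
  rw [hfun]
  rw [← Function.comp_assoc]
  rw [← Measure.map_map (f := (eqR m)) (g := (eqR m).symm ∘ (fun y => ψ y + eqR m C))
      (((hcont2.comp ((hψcont.add continuous_const))).measurable)) hcont.measurable]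
  rw [← Measure.map_map (f := fun y => ψ y + eqR m C) hcont2.measurable ((hψcont.add continuous_const).measurable)]
  have h1 : (ν.map (eqR m)).map (fun y => ψ y + eqR m C)
      = (ENNReal.ofReal (‖A.det‖ ^ (2 * m)))⁻¹ • (ν.map (eqR m)) := by
    have hsplit : (fun y => ψ y + eqR m C) = (fun y => eqR m C + y) ∘ ψ := by
      funext y; simp [add_comm]
    rw [hsplit, ← Measure.map_map (measurable_const_add _) hψcont.measurable]
    rw [Measure.map_linearMap_addHaar_pi_eq_smul_addHaar hψne (ν.map (eqR m))]
    rw [Measure.map_smul, MeasureTheory.map_add_left_eq_self]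
    congr 1
    rw [hψdet, abs_inv, abs_of_pos (by positivity)]
    rw [ENNReal.ofReal_inv_of_pos (by positivity)]
  rw [h1, Measure.map_smul]
  rw [Measure.map_map hcont2.measurable hcont.measurable]
  have : ((eqR m).symm ∘ (eqR m)) = id := by
    funext X; simp
  rw [this, Measure.map_id]
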